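/- Let W be a random variable valued in a measurable space α and Y a real-valued random variable, both on a common probability space, and let η be a random variable uniformly distributed on (0,1) and independent of W. Let F(w, y) denote the conditional cumulative distribution function of Y given W = w (the conditional CDF associated with the joint law of (W, Y) on α × ℝ), and define Y'(ω) := inf{ y ∈ ℝ : F(W(ω), y) ≥ η(ω) }. Then the joint law of (W, Y') equals the joint law of (W, Y); in particular, P(Y' ≤ y | W) = P(Y ≤ y | W) almost surely for every y ∈ ℝ. -/

import Mathlib

open MeasureTheory ProbabilityTheory

/-- Generalized inverse of a CDF: `sInf {y | u ≤ F y} ≤ t ↔ u ≤ F t` for `u ∈ (0,1)`. -/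
lemma aux_quantile_le_iff (F : StieltjesFunction ℝ)
    (h0 : Filter.Tendsto F Filter.atBot (nhds 0))
    (h1 : Filter.Tendsto F Filter.atTop (nhds 1))
    {u : ℝ} (hu : u ∈ Set.Ioo (0 : ℝ) 1) (t : ℝ) :
    sInf {y : ℝ | u ≤ F y} ≤ t ↔ u ≤ F t := by
  obtain ⟨hu0, hu1⟩ := hu
  have hne : {y : ℝ | u ≤ F y}.Nonempty := by
    obtain ⟨y, hy⟩ := (h1.eventually_const_lt hu1).exists
    exact ⟨y, hy.le⟩
  have hbdd : BddBelow {y : ℝ | u ≤ F y} := by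
    have := h0.eventually_lt_const hu0
    rw [Filter.eventually_atBot] at this
    obtain ⟨z, hz⟩ := this
    refine ⟨z, fun y hy => ?_⟩
    by_contra h
    push_neg at h
    exact (hz y h.le).not_ge hy
  constructor
  · intro hst
    have hall : ∀ z, t < z → u ≤ F z := by
      intro z hz
      obtain ⟨s, hs, hsz⟩ := (csInf_lt_iff hbdd hne).mp (lt_of_le_of_lt hst hz)
      exact hs.trans (F.mono hsz.le)
    have htend : Filter.Tendsto F (nhdsWithin t (Set.Ioi t)) (nhds (F t)) :=
      (F.right_continuous t).tendsto.mono_left (nhdsWithin_mono t Set.Ioi_subset_Ici_self)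
    exact ge_of_tendsto htend (eventually_mem_nhdsWithin.mono fun z hz => hall z hz)
  · intro h
    exact csInf_le hbdd h

lemma aux_volume_Iic_inter_Ioo {c : ℝ} (h0 : 0 ≤ c) (h1 : c ≤ 1) :
    volume (Set.Iic c ∩ Set.Ioo (0 : ℝ) 1) = ENNReal.ofReal c := by
  rcases lt_or_ge c 1 with hc | hc
  · have h : Set.Iic c ∩ Set.Ioo (0 : ℝ) 1 = Set.Ioc 0 c := by
      ext x
      simp only [Set.mem_inter_iff, Set.mem_Iic, Set.mem_Ioo, Set.mem_Ioc]
      exact ⟨fun h => ⟨h.2.1, h.1⟩, fun h => ⟨h.2, h.1, lt_of_le_of_lt h.2 hc⟩⟩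
    rw [h, Real.volume_Ioc, sub_zero]
  · have hc1 : c = 1 := le_antisymm h1 hc
    subst hc1
    have h : Set.Iic (1 : ℝ) ∩ Set.Ioo (0 : ℝ) 1 = Set.Ioo (0 : ℝ) 1 := by
      rw [Set.inter_eq_right]
      exact fun x hx => le_of_lt hx.2
    rw [h, Real.volume_Ioo, sub_zero]

/-- The conditional CDF composed with `W` is (a version of) the conditional expectation of the
indicator of `{Z ≤ y}` for any `Z` whose joint law with `W` is `ρ`. -/
lemma aux_condexp_indicator_eq {Ω α : Type*} [MeasurableSpace Ω] [MeasurableSpace α]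
    (μ : Measure Ω) [IsProbabilityMeasure μ] (W : Ω → α) (Z : Ω → ℝ)
    (hW : Measurable W) (hZ : Measurable Z)
    (ρ : Measure (α × ℝ)) [IsFiniteMeasure ρ]
    (hmap : Measure.map (fun ω => (W ω, Z ω)) μ = ρ) (y : ℝ) :
    μ[({ω | Z ω ≤ y}).indicator (fun _ => (1 : ℝ)) | MeasurableSpace.comap W ‹_›] =ᵐ[μ]
      fun ω => condCDF ρ (W ω) y := by
  have hm : MeasurableSpace.comap W ‹_› ≤ ‹MeasurableSpace Ω› := hW.comap_le
  have hρfst : ρ.fst = Measure.map W μ := by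
    rw [← hmap, Measure.fst_map_prodMk hZ]
  have hgmeas : Measurable fun ω => condCDF ρ (W ω) y :=
    (measurable_condCDF ρ y).comp hW
  have hZset : MeasurableSet {ω | Z ω ≤ y} := measurableSet_le hZ measurable_const
  have hf : Integrable (({ω | Z ω ≤ y}).indicator (fun _ => (1 : ℝ))) μ :=
    (integrable_const (1 : ℝ)).indicator hZset
  have hint : Integrable (fun ω => condCDF ρ (W ω) y) μ := by
    refine (integrable_const (1 : ℝ)).mono' hgmeas.aestronglyMeasurable ?_
    refine Filter.Eventually.of_forall fun ω => ?_
    rw [Real.norm_eq_abs, abs_of_nonneg (condCDF_nonneg ρ _ y)]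
    exact condCDF_le_one ρ _ y
  have hST : SigmaFinite (μ.trim hm) := by
    have : IsFiniteMeasure (μ.trim hm) := isFiniteMeasure_trim hm
    exact this.toSigmaFinite
  refine (ae_eq_condExp_of_forall_setIntegral_eq hm hf
    (fun s _ _ => hint.integrableOn) (fun s hs _ => ?_) ?_).symm
  · obtain ⟨s', hs', rfl⟩ := hs
    have hs'm : MeasurableSet s' := hs'
    -- LHS : ∫ x in W ⁻¹' s', condCDF ρ (W x) y ∂μ
    have hLHS : ∫ x in W ⁻¹' s', condCDF ρ (W x) y ∂μ = (ρ (s' ×ˢ Set.Iic y)).toReal := by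
      rw [← setIntegral_map hs'm (stronglyMeasurable_condCDF ρ y).aestronglyMeasurable
        hW.aemeasurable, ← hρfst, setIntegral_condCDF ρ y hs'm, measureReal_def]
    -- RHS : the indicator integral
    have hRHS : ∫ x in W ⁻¹' s', ({ω | Z ω ≤ y}).indicator (fun _ => (1 : ℝ)) x ∂μ
        = (ρ (s' ×ˢ Set.Iic y)).toReal := by
      rw [setIntegral_indicator hZset, setIntegral_const, smul_eq_mul, mul_one]
      congr 1
      have hpre : W ⁻¹' s' ∩ {ω | Z ω ≤ y}
          = (fun ω => (W ω, Z ω)) ⁻¹' (s' ×ˢ Set.Iic y) := by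
        ext ω
        simp [Set.mem_prod]
      rw [hpre, measureReal_def, ← Measure.map_apply (hW.prodMk hZ) (hs'm.prod measurableSet_Iic), hmap]
    rw [hLHS, hRHS]
  · refine StronglyMeasurable.aestronglyMeasurable ?_
    refine Measurable.stronglyMeasurable ?_
    exact (measurable_condCDF ρ y).comp (Measurable.of_comap_le le_rfl)

/-- **Conditional inverse-CDF transform.** If `η` is uniform on `(0,1)` and independent of `W`,
and `Y'` is defined as the generalized inverse of the conditional CDF of `Y` given `W`
evaluated at `η`, then `(W, Y')` has the same joint law as `(W, Y)`; in particular
`P(Y' ≤ y | W) = P(Y ≤ y | W)` almost surely for every `y`. -/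
theorem conditional_inverse_cdf_transform
    {Ω α : Type*} [MeasurableSpace Ω] [MeasurableSpace α]
    (μ : Measure Ω) [IsProbabilityMeasure μ]
    (W : Ω → α) (Y η : Ω → ℝ)
    (hW : Measurable W) (hY : Measurable Y) (hη : Measurable η)
    (hunif : Measure.map η μ = volume.restrict (Set.Ioo (0 : ℝ) 1))
    (hindep : IndepFun W η μ)
    (Y' : Ω → ℝ)
    (hY'def : ∀ ω, Y' ω =
      sInf {y : ℝ | η ω ≤ condCDF (Measure.map (fun ω' => (W ω', Y ω')) μ) (W ω) y}) :
    Measure.map (fun ω => (W ω, Y' ω)) μ = Measure.map (fun ω => (W ω, Y ω)) μ ∧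
    ∀ y : ℝ,
      μ[({ω | Y' ω ≤ y}).indicator (fun _ => (1 : ℝ)) | MeasurableSpace.comap W ‹_›] =ᵐ[μ]
        μ[({ω | Y ω ≤ y}).indicator (fun _ => (1 : ℝ)) | MeasurableSpace.comap W ‹_›] := by
  set ρ : Measure (α × ℝ) := Measure.map (fun ω' => (W ω', Y ω')) μ with hρ
  have hWY : Measurable fun ω => (W ω, Y ω) := hW.prodMk hY
  have hρprob : IsProbabilityMeasure ρ := Measure.isProbabilityMeasure_map hWY.aemeasurable
  -- a measurable truncation of η into (0,1)
  set η' : Ω → ℝ := fun ω => if η ω ∈ Set.Ioo (0 : ℝ) 1 then η ω else 1/2 with hη'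
  have hη'meas : Measurable η' :=
    Measurable.ite (hη measurableSet_Ioo) hη measurable_const
  have hη'mem : ∀ ω, η' ω ∈ Set.Ioo (0 : ℝ) 1 := by
    intro ω
    rw [hη']
    dsimp only
    split_ifs with h
    · exact h
    · norm_num
  have hη'ae : η' =ᵐ[μ] η := by
    have h0 : μ (η ⁻¹' (Set.Ioo (0 : ℝ) 1)ᶜ) = 0 := by
      rw [← Measure.map_apply hη measurableSet_Ioo.compl, hunif,
        Measure.restrict_apply measurableSet_Ioo.compl, Set.compl_inter_self, measure_empty]
    refine Filter.eventuallyEq_of_mem (s := η ⁻¹' Set.Ioo (0 : ℝ) 1) ?_ ?_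
    · rw [mem_ae_iff, ← Set.preimage_compl]
      exact h0
    · intro ω hω
      rw [hη']
      dsimp only
      exact if_pos hω
  -- the measurable version of `Y'`
  set Z : Ω → ℝ := fun ω => sInf {y : ℝ | η' ω ≤ condCDF ρ (W ω) y} with hZ
  have hkey : ∀ ω t, Z ω ≤ t ↔ η' ω ≤ condCDF ρ (W ω) t := fun ω t =>
    aux_quantile_le_iff (condCDF ρ (W ω)) (tendsto_condCDF_atBot ρ (W ω))
      (tendsto_condCDF_atTop ρ (W ω)) (hη'mem ω) t
  have hZmeas : Measurable Z := by
    refine measurable_of_Iic fun t => ?_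
    have : Z ⁻¹' Set.Iic t = {ω | η' ω ≤ condCDF ρ (W ω) t} := by
      ext ω
      exact hkey ω t
    rw [this]
    exact measurableSet_le hη'meas ((measurable_condCDF ρ t).comp hW)
  have hZY' : Z =ᵐ[μ] Y' := by
    filter_upwards [hη'ae] with ω h
    rw [hZ]
    dsimp only
    rw [h]
    exact (hY'def ω).symm
  -- Part 1 for Z
  have hmapZ : Measure.map (fun ω => (W ω, Z ω)) μ = ρ := by
    have hmapWη : Measure.map (fun ω => (W ω, η ω)) μ
        = (Measure.map W μ).prod (Measure.map η μ) :=
      (indepFun_iff_map_prod_eq_prod_map_map hW.aemeasurable hη.aemeasurable).mp hindep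
    have hfst : ρ.fst = Measure.map W μ := Measure.fst_map_prodMk hY
    have hmapprob : IsProbabilityMeasure (Measure.map (fun ω => (W ω, Z ω)) μ) :=
      Measure.isProbabilityMeasure_map (hW.prodMk hZmeas).aemeasurable
    have hspan2 : IsCountablySpanning (Set.range (Set.Iic : ℝ → Set ℝ)) := by
      refine ⟨fun n => Set.Iic (n : ℝ), fun n => ⟨(n : ℝ), rfl⟩, ?_⟩
      ext x
      simp only [Set.mem_iUnion, Set.mem_Iic, Set.mem_univ, iff_true]
      obtain ⟨n, hn⟩ := exists_nat_ge x
      exact ⟨n, hn⟩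
    have hgen : MeasurableSpace.generateFrom
        (Set.image2 (· ×ˢ ·) {s : Set α | MeasurableSet s}
          (Set.range (Set.Iic : ℝ → Set ℝ))) = Prod.instMeasurableSpace :=
      generateFrom_eq_prod MeasurableSpace.generateFrom_measurableSet
        ((borel_eq_generateFrom_Iic ℝ).symm.trans BorelSpace.measurable_eq.symm)
        isCountablySpanning_measurableSet hspan2
    refine ext_of_generate_finite _ hgen.symm
      (IsPiSystem.prod MeasurableSpace.isPiSystem_measurableSet isPiSystem_Iic) ?_ ?_
    · rintro _ ⟨s, hs, _, ⟨t, rfl⟩, rfl⟩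
      have hs' : MeasurableSet s := hs
      -- LHS
      rw [Measure.map_apply (hW.prodMk hZmeas) (hs'.prod measurableSet_Iic)]
      have hpre : (fun ω => (W ω, Z ω)) ⁻¹' (s ×ˢ Set.Iic t)
          = {ω | W ω ∈ s ∧ η' ω ≤ condCDF ρ (W ω) t} := by
        ext ω
        simp only [Set.mem_preimage, Set.mem_prod, Set.mem_Iic, Set.mem_setOf_eq]
        exact and_congr Iff.rfl (hkey ω t)
      rw [hpre]
      -- replace η' by η a.e.
      have haeset : {ω | W ω ∈ s ∧ η' ω ≤ condCDF ρ (W ω) t}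
          =ᵐ[μ] {ω | W ω ∈ s ∧ η ω ≤ condCDF ρ (W ω) t} := by
        filter_upwards [hη'ae] with ω h
        have : (W ω ∈ s ∧ η' ω ≤ condCDF ρ (W ω) t)
            = (W ω ∈ s ∧ η ω ≤ condCDF ρ (W ω) t) := by rw [h]
        exact this
      rw [measure_congr haeset]
      -- express via the joint law of (W, η)
      set B : Set (α × ℝ) := {p | p.1 ∈ s ∧ p.2 ≤ condCDF ρ p.1 t} with hB
      have hBmeas : MeasurableSet B :=
        (hs'.preimage measurable_fst).inter
          (measurableSet_le measurable_snd ((measurable_condCDF ρ t).comp measurable_fst))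
      have hpre2 : {ω | W ω ∈ s ∧ η ω ≤ condCDF ρ (W ω) t}
          = (fun ω => (W ω, η ω)) ⁻¹' B := rfl
      rw [hpre2, ← Measure.map_apply (hW.prodMk hη) hBmeas, hmapWη, hunif,
        Measure.prod_apply hBmeas]
      classical
      have hsec : ∀ w, Prod.mk w ⁻¹' B = if w ∈ s then Set.Iic (condCDF ρ w t) else ∅ := by
        intro w
        by_cases hw : w ∈ s
        · rw [if_pos hw]
          ext u
          simp only [Set.mem_preimage, hB, Set.mem_setOf_eq, Set.mem_Iic]
          exact ⟨fun h => h.2, fun h => ⟨hw, h⟩⟩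
        · rw [if_neg hw]
          ext u
          simp only [Set.mem_preimage, hB, Set.mem_setOf_eq, Set.mem_empty_iff_false, iff_false]
          exact fun h => hw h.1
      calc ∫⁻ w, (volume.restrict (Set.Ioo (0:ℝ) 1)) (Prod.mk w ⁻¹' B) ∂(Measure.map W μ)
          = ∫⁻ w, s.indicator (fun w => ENNReal.ofReal (condCDF ρ w t)) w
              ∂(Measure.map W μ) := by
            refine lintegral_congr fun w => ?_
            rw [hsec w]
            by_cases hw : w ∈ s
            · rw [if_pos hw, Set.indicator_of_mem hw,
                Measure.restrict_apply measurableSet_Iic,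
                aux_volume_Iic_inter_Ioo (condCDF_nonneg ρ w t) (condCDF_le_one ρ w t)]
            · rw [if_neg hw, Set.indicator_of_notMem hw, measure_empty]
        _ = ∫⁻ w in s, ENNReal.ofReal (condCDF ρ w t) ∂(Measure.map W μ) := by
            rw [lintegral_indicator hs']
        _ = ∫⁻ w in s, ENNReal.ofReal (condCDF ρ w t) ∂ρ.fst := by rw [hfst]
        _ = ρ (s ×ˢ Set.Iic t) := setLIntegral_condCDF ρ t hs'
    · simp [measure_univ]
  constructor
  · -- part 1
    have : Measure.map (fun ω => (W ω, Y' ω)) μ = Measure.map (fun ω => (W ω, Z ω)) μ := by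
      refine Measure.map_congr ?_
      filter_upwards [hZY'] with ω h
      rw [h]
    rw [this, hmapZ]
  · -- part 2
    intro y
    have h1 : μ[({ω | Y' ω ≤ y}).indicator (fun _ => (1 : ℝ)) | MeasurableSpace.comap W ‹_›]
        =ᵐ[μ] μ[({ω | Z ω ≤ y}).indicator (fun _ => (1 : ℝ)) | MeasurableSpace.comap W ‹_›] := by
      refine condExp_congr_ae ?_
      filter_upwards [hZY'] with ω h
      simp only [Set.indicator_apply, Set.mem_setOf_eq, h]
    have h2 := aux_condexp_indicator_eq μ W Z hW hZmeas ρ hmapZ y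
    have h3 := aux_condexp_indicator_eq μ W Y hW hY ρ rfl y
    exact h1.trans (h2.trans h3.symm)
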